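/- Let R be a commutative unital ring and a, b ∈ R such that a^n ∉ Rb for all n ∈ ℕ. Then there exists a regular Sylvester matrix rank function rk for R with rk(a) = 1 and rk(b) = 0. -/

import Mathlib

open Matrix in
/-- The type of all rectangular matrices over `R`. -/
abbrev MatSig (R : Type) [Ring R] := Σ (n m : ℕ), Matrix (Fin n) (Fin m) R

open Matrix in
/-- The block diagonal-with-corner matrix `[[C, E], [0, D]]`, as an element of `MatSig R`. -/
def blockSig {R : Type} [Ring R] {p q r s : ℕ} (C : Matrix (Fin p) (Fin r) R)
    (E : Matrix (Fin p) (Fin s) R) (D : Matrix (Fin q) (Fin s) R) : MatSig R :=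
  ⟨p + q, r + s, Matrix.reindex finSumFinEquiv finSumFinEquiv (Matrix.fromBlocks C E 0 D)⟩

/-- One step of the Malcolmson relation: `A ≲ B` iff `A = C * B * D` for some `C, D`, or
`B = [[C, E], [0, D]]` and `A = [[C, 0], [0, D]]` for some `C, D, E`. -/
def MStep {R : Type} [Ring R] (A B : MatSig R) : Prop :=
  (∃ (C : Matrix (Fin A.1) (Fin B.1) R) (D : Matrix (Fin B.2.1) (Fin A.2.1) R),
      A.2.2 = C * B.2.2 * D) ∨
  (∃ (p q r s : ℕ) (C : Matrix (Fin p) (Fin r) R) (E : Matrix (Fin p) (Fin s) R)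
      (D : Matrix (Fin q) (Fin s) R), A = blockSig C 0 D ∧ B = blockSig C E D)

/-- Malcolmson subequivalence `A ≼_M B`: a finite chain of `MStep`s from `A` to `B`. -/
def Msub {R : Type} [Ring R] (A B : MatSig R) : Prop :=
  Relation.ReflTransGen (MStep (R := R)) A B

/-- A Sylvester matrix rank function for a unital ring `R`. -/
structure SylvesterRank (R : Type) [Ring R] where
  rk : MatSig R → ℝ
  rk_nonneg : ∀ A, 0 ≤ rk A
  rk_zero : rk ⟨1, 1, 0⟩ = 0
  rk_one : rk ⟨1, 1, 1⟩ = 1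
  rk_mul_le_left : ∀ {n m k : ℕ} (A : Matrix (Fin n) (Fin m) R) (B : Matrix (Fin m) (Fin k) R),
      rk ⟨n, k, A * B⟩ ≤ rk ⟨n, m, A⟩
  rk_mul_le_right : ∀ {n m k : ℕ} (A : Matrix (Fin n) (Fin m) R) (B : Matrix (Fin m) (Fin k) R),
      rk ⟨n, k, A * B⟩ ≤ rk ⟨m, k, B⟩
  rk_diag : ∀ {p q r s : ℕ} (A : Matrix (Fin p) (Fin r) R) (B : Matrix (Fin q) (Fin s) R),
      rk (blockSig A 0 B) = rk ⟨p, r, A⟩ + rk ⟨q, s, B⟩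
  rk_block_ge : ∀ {p q r s : ℕ} (A : Matrix (Fin p) (Fin r) R) (E : Matrix (Fin p) (Fin s) R)
      (B : Matrix (Fin q) (Fin s) R), rk ⟨p, r, A⟩ + rk ⟨q, s, B⟩ ≤ rk (blockSig A E B)

/-- The rank of a ring element, viewed as a `1 × 1` matrix. -/
noncomputable def SylvesterRank.rk1 {R : Type} [Ring R] (f : SylvesterRank R) (a : R) : ℝ :=
  f.rk ⟨1, 1, Matrix.of fun _ _ => a⟩

/-- A witness that a Sylvester matrix rank function is regular: a unital ring homomorphism
`φ : R →+* S` to a von Neumann regular ring `S` carrying a Sylvester matrix rank function `g`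
through which `f` factors. -/
structure RegularWitness {R : Type} [Ring R] (f : SylvesterRank R) where
  S : Type
  [instS : Ring S]
  vnr : ∀ a : S, ∃ b : S, a * b * a = a
  φ : R →+* S
  g : SylvesterRank S
  compat : ∀ (p q : ℕ) (A : Matrix (Fin p) (Fin q) R), f.rk ⟨p, q, A⟩ = g.rk ⟨p, q, A.map φ⟩

/-- A Sylvester matrix rank function is regular if it factors through a unital ring
homomorphism to a von Neumann regular ring. -/
def SylvesterRank.IsRegular {R : Type} [Ring R] (f : SylvesterRank R) : Prop :=
  Nonempty (RegularWitness f)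

set_option linter.unusedSectionVars false
set_option linter.unusedVariables false

open Matrix Module

section BlockRank

variable {K : Type} [Field K] {p q r s : Type}
  [Fintype p] [Fintype q] [Fintype r] [Fintype s]

/-- Extension by zero on the left summand, as a linear map. -/
def inlL (K p q : Type) [Field K] : (p → K) →ₗ[K] (p ⊕ q → K) where
  toFun v := Sum.elim v 0
  map_add' u v := by funext i; cases i <;> simp
  map_smul' c v := by funext i; cases i <;> simp

/-- Extension by zero on the right summand, as a linear map. -/
def inrL (K p q : Type) [Field K] : (q → K) →ₗ[K] (p ⊕ q → K) where
  toFun v := Sum.elim 0 v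
  map_add' u v := by funext i; cases i <;> simp
  map_smul' c v := by funext i; cases i <;> simp

lemma inlL_injective : Function.Injective (inlL K p q) := fun u v huv =>
  funext fun i => congrFun huv (Sum.inl i)

lemma inrL_injective : Function.Injective (inrL K p q) := fun u v huv =>
  funext fun i => congrFun huv (Sum.inr i)

lemma finrank_map_inj {V W : Type} [AddCommGroup V] [Module K V] [AddCommGroup W] [Module K W]
    {f : V →ₗ[K] W} (hf : Function.Injective f) (U : Submodule K V) :
    finrank K (U.map f) = finrank K U :=
  (LinearEquiv.finrank_eq (Submodule.equivMapOfInjective f hf U)).symm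

lemma mulVecLin_fromBlocks_comp_inlL (A : Matrix p r K) (E : Matrix p s K) (B : Matrix q s K) :
    (fromBlocks A E 0 B).mulVecLin ∘ₗ inlL K r s = inlL K p q ∘ₗ A.mulVecLin := by
  apply LinearMap.ext
  intro v
  funext i
  cases i <;>
    simp [inlL, Matrix.mulVecLin, Matrix.mulVec, dotProduct, Fintype.sum_sum_type]

lemma funLeft_inr_comp_mulVecLin (A : Matrix p r K) (E : Matrix p s K) (B : Matrix q s K) :
    LinearMap.funLeft K K Sum.inr ∘ₗ (fromBlocks A E 0 B).mulVecLin
      = B.mulVecLin ∘ₗ LinearMap.funLeft K K (Sum.inr : s → r ⊕ s) := by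
  apply LinearMap.ext
  intro v
  funext j
  simp [Matrix.mulVecLin, Matrix.mulVec, dotProduct, Fintype.sum_sum_type,
    LinearMap.funLeft]

lemma mulVecLin_fromBlocks_zero₁ (A : Matrix p r K) :
    (fromBlocks A (0 : Matrix p s K) (0 : Matrix q r K) (0 : Matrix q s K)).mulVecLin
      = inlL K p q ∘ₗ A.mulVecLin ∘ₗ LinearMap.funLeft K K (Sum.inl : r → r ⊕ s) := by
  apply LinearMap.ext
  intro v
  funext i
  cases i <;>
    simp [inlL, Matrix.mulVecLin, Matrix.mulVec, dotProduct, Fintype.sum_sum_type,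
      LinearMap.funLeft]

lemma mulVecLin_fromBlocks_zero₂ (B : Matrix q s K) :
    (fromBlocks (0 : Matrix p r K) (0 : Matrix p s K) (0 : Matrix q r K) B).mulVecLin
      = inrL K p q ∘ₗ B.mulVecLin ∘ₗ LinearMap.funLeft K K (Sum.inr : s → r ⊕ s) := by
  apply LinearMap.ext
  intro v
  funext i
  cases i <;>
    simp [inrL, Matrix.mulVecLin, Matrix.mulVec, dotProduct, Fintype.sum_sum_type,
      LinearMap.funLeft]

lemma range_funLeft_inl :
    LinearMap.range (LinearMap.funLeft K K (Sum.inl : r → r ⊕ s)) = ⊤ :=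
  LinearMap.range_eq_top.mpr
    (LinearMap.funLeft_surjective_of_injective K K _ Sum.inl_injective)

lemma range_funLeft_inr :
    LinearMap.range (LinearMap.funLeft K K (Sum.inr : s → r ⊕ s)) = ⊤ :=
  LinearMap.range_eq_top.mpr
    (LinearMap.funLeft_surjective_of_injective K K _ Sum.inr_injective)

lemma rank_fromBlocks_zero₁ (A : Matrix p r K) :
    (fromBlocks A (0 : Matrix p s K) (0 : Matrix q r K) (0 : Matrix q s K)).rank = A.rank := by
  rw [Matrix.rank, mulVecLin_fromBlocks_zero₁, LinearMap.range_comp,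
    LinearMap.range_comp_of_range_eq_top _ range_funLeft_inl,
    finrank_map_inj inlL_injective, Matrix.rank]

lemma rank_fromBlocks_zero₂ (B : Matrix q s K) :
    (fromBlocks (0 : Matrix p r K) (0 : Matrix p s K) (0 : Matrix q r K) B).rank = B.rank := by
  rw [Matrix.rank, mulVecLin_fromBlocks_zero₂, LinearMap.range_comp,
    LinearMap.range_comp_of_range_eq_top _ range_funLeft_inr,
    finrank_map_inj inrL_injective, Matrix.rank]

lemma matrix_rank_add_le (M N : Matrix p r K) : (M + N).rank ≤ M.rank + N.rank := by
  rw [Matrix.rank, Matrix.mulVecLin_add]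
  have hle : LinearMap.range (M.mulVecLin + N.mulVecLin)
      ≤ LinearMap.range M.mulVecLin ⊔ LinearMap.range N.mulVecLin := by
    rintro x ⟨y, rfl⟩
    exact Submodule.mem_sup.mpr ⟨_, ⟨y, rfl⟩, _, ⟨y, rfl⟩, rfl⟩
  exact (Submodule.finrank_mono hle).trans
    (Submodule.finrank_add_le_finrank_add_finrank _ _)

set_option synthInstance.maxHeartbeats 1000000 in
lemma rank_fromBlocks_ge (A : Matrix p r K) (E : Matrix p s K) (B : Matrix q s K) :
    A.rank + B.rank ≤ (fromBlocks A E 0 B).rank := by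
  classical
  set f := (fromBlocks A E 0 B).mulVecLin with hf
  set W := LinearMap.range f with hW
  set π := LinearMap.funLeft K K (Sum.inr : q → p ⊕ q) with hπ
  set T := (LinearMap.range A.mulVecLin).map (inlL K p q) with hT
  have hTW : T ≤ W := by
    rw [hT, ← LinearMap.range_comp, ← mulVecLin_fromBlocks_comp_inlL A E B]
    exact LinearMap.range_comp_le_range _ _
  have hTker : T ≤ LinearMap.ker π := by
    rintro x ⟨y, -, rfl⟩
    rw [LinearMap.mem_ker]
    funext j
    rfl
  have hrange : LinearMap.range (π.domRestrict W) = LinearMap.range B.mulVecLin := by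
    rw [LinearMap.range_domRestrict, hW, ← LinearMap.range_comp,
      funLeft_inr_comp_mulVecLin A E B, LinearMap.range_comp_of_range_eq_top _ range_funLeft_inr]
  have h1 := LinearMap.finrank_range_add_finrank_ker (π.domRestrict W)
  have h3 : A.rank ≤ finrank K (LinearMap.ker (π.domRestrict W)) := by
    have e := Submodule.comapSubtypeEquivOfLe hTW
    have hT'le : T.comap W.subtype ≤ LinearMap.ker (π.domRestrict W) := by
      intro x hx
      rw [LinearMap.mem_ker, LinearMap.domRestrict_apply]
      exact hTker hx
    calc A.rank = finrank K T := (finrank_map_inj inlL_injective _).symm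
      _ = finrank K (T.comap W.subtype) := (LinearEquiv.finrank_eq e).symm
      _ ≤ _ := Submodule.finrank_mono hT'le
  have h2 : B.rank = finrank K (LinearMap.range (π.domRestrict W)) := by
    rw [hrange, Matrix.rank]
  calc A.rank + B.rank
      ≤ finrank K (LinearMap.ker (π.domRestrict W))
        + finrank K (LinearMap.range (π.domRestrict W)) := by
        rw [← h2]; exact Nat.add_le_add h3 le_rfl
    _ = finrank K W := by rw [add_comm]; exact h1
    _ = (fromBlocks A E 0 B).rank := rfl

lemma rank_fromBlocks_diag (A : Matrix p r K) (B : Matrix q s K) :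
    (fromBlocks A 0 0 B).rank = A.rank + B.rank := by
  refine le_antisymm ?_ (rank_fromBlocks_ge A 0 B)
  have hsum : fromBlocks A (0 : Matrix p s K) (0 : Matrix q r K) B
      = fromBlocks A 0 0 0 + fromBlocks 0 0 0 B := by
    rw [Matrix.fromBlocks_add]
    simp
  rw [hsum]
  exact (matrix_rank_add_le _ _).trans
    (by rw [rank_fromBlocks_zero₁, rank_fromBlocks_zero₂])

lemma rank_reindex' {m n m' n' : Type} [Fintype n] [Fintype n']
    (e₁ : m ≃ m') (e₂ : n ≃ n') (M : Matrix m n K) :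
    (Matrix.reindex e₁ e₂ M).rank = M.rank := by
  rw [Matrix.rank, Matrix.rank, Matrix.mulVecLin_reindex, LinearMap.range_comp,
    LinearMap.range_comp, LinearEquiv.range, Submodule.map_top, LinearEquiv.finrank_map_eq]

end BlockRank


/-- The classical rank function on matrices over a field, as a Sylvester rank function. -/
noncomputable def fieldRank (K : Type) [Field K] : SylvesterRank K where
  rk X := (X.2.2.rank : ℝ)
  rk_nonneg X := by positivity
  rk_zero := by simp
  rk_one := by simp
  rk_mul_le_left A B := Nat.cast_le.mpr (Matrix.rank_mul_le_left A B)
  rk_mul_le_right A B := Nat.cast_le.mpr (Matrix.rank_mul_le_right A B)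
  rk_diag A B := by
    show (((Matrix.reindex finSumFinEquiv finSumFinEquiv
        (Matrix.fromBlocks A 0 0 B)).rank : ℕ) : ℝ) = _
    rw [rank_reindex', rank_fromBlocks_diag]
    push_cast
    rfl
  rk_block_ge A E B := by
    show _ ≤ (((Matrix.reindex finSumFinEquiv finSumFinEquiv
        (Matrix.fromBlocks A E 0 B)).rank : ℕ) : ℝ)
    rw [rank_reindex']
    calc ((A.rank : ℝ) + (B.rank : ℝ)) = ((A.rank + B.rank : ℕ) : ℝ) := by push_cast; rfl
      _ ≤ _ := Nat.cast_le.mpr (rank_fromBlocks_ge A E B)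

lemma blockSig_map {R S : Type} [Ring R] [Ring S] (φ : R →+* S) {p q r s : ℕ}
    (C : Matrix (Fin p) (Fin r) R) (E : Matrix (Fin p) (Fin s) R)
    (D : Matrix (Fin q) (Fin s) R) :
    ((blockSig C E D).2.2).map φ = (blockSig (C.map φ) (E.map φ) (D.map φ)).2.2 := by
  show ((Matrix.reindex finSumFinEquiv finSumFinEquiv (Matrix.fromBlocks C E 0 D)).map φ)
      = Matrix.reindex finSumFinEquiv finSumFinEquiv
          (Matrix.fromBlocks (C.map φ) (E.map φ) 0 (D.map φ))
  rw [Matrix.reindex_apply, Matrix.reindex_apply, ← Matrix.submatrix_map,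
    Matrix.fromBlocks_map, Matrix.map_zero φ (map_zero φ)]

/-- Pull back a Sylvester rank function along a ring homomorphism. -/
noncomputable def SylvesterRank.pullback {R S : Type} [Ring R] [Ring S]
    (g : SylvesterRank S) (φ : R →+* S) : SylvesterRank R where
  rk X := g.rk ⟨X.1, X.2.1, X.2.2.map φ⟩
  rk_nonneg X := g.rk_nonneg _
  rk_zero := by
    show g.rk ⟨1, 1, (0 : Matrix (Fin 1) (Fin 1) R).map φ⟩ = 0
    rw [show ((0 : Matrix (Fin 1) (Fin 1) R)).map φ = 0 from Matrix.map_zero φ (map_zero φ)]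
    exact g.rk_zero
  rk_one := by
    show g.rk ⟨1, 1, (1 : Matrix (Fin 1) (Fin 1) R).map φ⟩ = 1
    rw [show ((1 : Matrix (Fin 1) (Fin 1) R)).map φ = 1 from
      Matrix.map_one φ (map_zero φ) (map_one φ)]
    exact g.rk_one
  rk_mul_le_left A B := by
    show g.rk ⟨_, _, (A * B).map φ⟩ ≤ _
    rw [Matrix.map_mul]
    exact g.rk_mul_le_left _ _
  rk_mul_le_right A B := by
    show g.rk ⟨_, _, (A * B).map φ⟩ ≤ _
    rw [Matrix.map_mul]
    exact g.rk_mul_le_right _ _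
  rk_diag A B := by
    show g.rk ⟨_, _, ((blockSig A 0 B).2.2).map φ⟩ = _
    rw [blockSig_map, Matrix.map_zero φ (map_zero φ)]
    exact g.rk_diag _ _
  rk_block_ge A E B := by
    show _ ≤ g.rk ⟨_, _, ((blockSig A E B).2.2).map φ⟩
    rw [blockSig_map]
    exact g.rk_block_ge _ _ _

/-- Lemma: let `R` be a commutative unital ring and `a, b ∈ R` with `a^n ∉ Rb` for all
`n ≥ 1`.  Then there is a regular Sylvester matrix rank function `rk` for `R` with
`rk(a) = 1` and `rk(b) = 0`. -/
theorem stmt_10 {R : Type} [CommRing R] (a b : R)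
    (h : ∀ n : ℕ, 0 < n → a ^ n ∉ Ideal.span {b}) :
    ∃ f : SylvesterRank R, f.IsRegular ∧ f.rk1 a = 1 ∧ f.rk1 b = 0 := by
  have hd : Disjoint ((Ideal.span {b} : Ideal R) : Set R)
      ((Submonoid.powers a : Submonoid R) : Set R) := by
    rw [Set.disjoint_left]
    rintro x hx ⟨n, rfl⟩
    cases n with
    | zero =>
        exact h 1 one_pos (by
          have : (1 : R) ∈ Ideal.span {b} := by simpa using hx
          simpa [pow_one] using Ideal.mul_mem_left _ a this)
    | succ n => exact h (n + 1) n.succ_pos hx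
  obtain ⟨P, hP, hle, hdisj⟩ := Ideal.exists_le_prime_disjoint _ _ hd
  haveI := hP
  let K := FractionRing (R ⧸ P)
  let φ : R →+* K := (algebraMap (R ⧸ P) K).comp (Ideal.Quotient.mk P)
  have haP : a ∉ P := fun haP =>
    Set.disjoint_left.mp hdisj haP ⟨1, by simp⟩
  have hφa : φ a ≠ 0 := by
    intro h0
    apply haP
    have h0' : algebraMap (R ⧸ P) K (Ideal.Quotient.mk P a) = 0 := h0
    exact Ideal.Quotient.eq_zero_iff_mem.mp
      ((IsFractionRing.to_map_eq_zero_iff (K := K)).mp h0')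
  have hφb : φ b = 0 := by
    have : Ideal.Quotient.mk P b = 0 :=
      Ideal.Quotient.eq_zero_iff_mem.mpr (hle (Ideal.subset_span rfl))
    simp [φ, this]
  have vnr : ∀ x : K, ∃ y : K, x * y * x = x := by
    intro x
    rcases eq_or_ne x 0 with rfl | hx
    · exact ⟨0, by simp⟩
    · exact ⟨x⁻¹, by rw [mul_inv_cancel₀ hx, one_mul]⟩
  refine ⟨(fieldRank K).pullback φ, ⟨⟨K, vnr, φ, fieldRank K, fun _ _ _ => rfl⟩⟩, ?_, ?_⟩
  · show (((Matrix.of fun _ _ => a : Matrix (Fin 1) (Fin 1) R).map φ).rank : ℝ) = 1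
    have hm : ((Matrix.of fun _ _ => a : Matrix (Fin 1) (Fin 1) R).map φ)
        = Matrix.of fun _ _ => φ a := rfl
    rw [hm]
    have hu : IsUnit (Matrix.of fun _ _ => φ a : Matrix (Fin 1) (Fin 1) K) := by
      rw [Matrix.isUnit_iff_isUnit_det, Matrix.det_fin_one]
      exact isUnit_iff_ne_zero.mpr hφa
    rw [Matrix.rank_of_isUnit _ hu]
    simp
  · show (((Matrix.of fun _ _ => b : Matrix (Fin 1) (Fin 1) R).map φ).rank : ℝ) = 0
    have hm : ((Matrix.of fun _ _ => b : Matrix (Fin 1) (Fin 1) R).map φ) = 0 := by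
      ext i j
      simpa using hφb
    rw [hm]
    simp
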